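/- arXiv:1212.2785 — 6 statements merged into one kernel-verified Lean document; each statement's English description precedes it below -/
import Mathlib

section
/- For every integer n > 1, the open interval (2n, 3n) contains a prime number. -/
section ElBachraoui

open Nat Finset

/-- If `N < p^2` and there is no carry at the first digit, `p` does not divide `choose N k`. -/
theorem fact_choose_eq_zero {N k p : ℕ} (hp : p.Prime) (hkN : k ≤ N) (hsq : N < p ^ 2)
    (hmod : k % p + (N - k) % p < p) : (Nat.choose N k).factorization p = 0 := by
  rw [Nat.factorization_def _ hp, @padicValNat_def _ ⟨hp⟩ _ (Nat.choose_pos hkN).ne']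
  rw [← Nat.cast_inj (R := ℕ∞), ← FiniteMultiplicity.emultiplicity_eq_multiplicity
    (Nat.finiteMultiplicity_iff.2 ⟨hp.ne_one, Nat.choose_pos hkN⟩)]
  rw [hp.emultiplicity_choose hkN (lt_add_one _)]
  simp only [Nat.cast_zero, Nat.cast_eq_zero, Finset.card_eq_zero, Finset.filter_eq_empty_iff]
  intro i hi
  rw [Finset.mem_Ico] at hi
  rcases eq_or_lt_of_le hi.1 with rfl | h2
  · simpa using hmod
  · -- i ≥ 2 : p ^ i > N ≥ sum of remainders
    have hpi : N < p ^ i := lt_of_lt_of_le hsq (Nat.pow_le_pow_right hp.pos h2)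
    have h1 : k % p ^ i ≤ k := Nat.mod_le _ _
    have h2' : (N - k) % p ^ i ≤ N - k := Nat.mod_le _ _
    omega

/-- If there is a carry at the first digit, `p` divides `choose N k`. -/
theorem prime_dvd_choose_of_carry {N k p : ℕ} (hp : p.Prime) (hkN : k ≤ N) (hpN : p ≤ N)
    (hmod : p ≤ k % p + (N - k) % p) : p ∣ Nat.choose N k := by
  rw [Nat.Prime.dvd_iff_one_le_factorization hp (Nat.choose_pos hkN).ne']
  rw [Nat.factorization_def _ hp, @padicValNat_def _ ⟨hp⟩ _ (Nat.choose_pos hkN).ne']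
  rw [← Nat.cast_le (α := ℕ∞), ← FiniteMultiplicity.emultiplicity_eq_multiplicity
    (Nat.finiteMultiplicity_iff.2 ⟨hp.ne_one, Nat.choose_pos hkN⟩)]
  rw [hp.emultiplicity_choose hkN (lt_add_one _)]
  have : (1 : ℕ) ∈ Finset.filter (fun i => p ^ i ≤ k % p ^ i + (N - k) % p ^ i)
      (Finset.Ico 1 (Nat.log p N + 1)) := by
    rw [Finset.mem_filter, Finset.mem_Ico]
    refine ⟨⟨le_refl _, ?_⟩, by simpa using hmod⟩
    have := Nat.log_pos hp.one_lt hpN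
    omega
  have hcard := Finset.card_pos.mpr ⟨1, this⟩
  exact_mod_cast hcard

/-- Single-term upper bound: `choose m k * 2^k ≤ 3^m`. -/
theorem choose_mul_two_pow_le {m k : ℕ} (hk : k ≤ m) : Nat.choose m k * 2 ^ k ≤ 3 ^ m := by
  have h := add_pow 2 1 m (R := ℕ)
  norm_num at h
  rw [h]
  have hmem : k ∈ Finset.range (m + 1) := Finset.mem_range.mpr (Nat.lt_succ_of_le hk)
  calc Nat.choose m k * 2 ^ k = 2 ^ k * Nat.choose m k := by ring
  _ ≤ ∑ i ∈ Finset.range (m + 1), 2 ^ i * Nat.choose m i :=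
      Finset.single_le_sum (f := fun i => 2 ^ i * Nat.choose m i) (fun i _ => Nat.zero_le _) hmem

/-- Lower bound: `3^(3n) ≤ (3n+1) * (4^n * choose (3n) n)`. -/
theorem lower_bound_choose (n : ℕ) : 3 ^ (3 * n) ≤ (3 * n + 1) * (4 ^ n * Nat.choose (3 * n) n) := by
  set t : ℕ → ℕ := fun k => 2 ^ k * Nat.choose (3 * n) k with ht
  have key : ∀ k, t k * (k + 1) = t (k + 1) * (k + 1) + t (k+1) * 0 ∨ True := fun _ => Or.inr trivial
  -- step identity
  have step : ∀ k, t (k + 1) * (k + 1) = t k * (2 * (3 * n - k)) := by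
    intro k
    have h := Nat.choose_succ_right_eq (3 * n) k
    simp only [ht]
    calc 2 ^ (k+1) * Nat.choose (3*n) (k+1) * (k+1)
        = 2 * 2 ^ k * (Nat.choose (3*n) (k+1) * (k+1)) := by ring
      _ = 2 * 2 ^ k * (Nat.choose (3*n) k * (3*n - k)) := by rw [h]
      _ = 2 ^ k * Nat.choose (3*n) k * (2 * (3*n - k)) := by ring
  -- increasing up to 2n
  have up : ∀ d, t (2 * n - d) ≤ t (2 * n) := by
    intro d
    induction d with
    | zero => simp
    | succ d ih =>
      rcases Nat.lt_or_ge (2 * n) (d + 1) with h | h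
      · have : 2 * n - (d + 1) = 2 * n - d := by omega
        rw [this]; exact ih
      · set k := 2 * n - (d + 1) with hk
        have hk2 : k + 1 = 2 * n - d := by omega
        have hkle : k ≤ 2 * n - 1 := by omega
        have hcoef : k + 1 ≤ 2 * (3 * n - k) := by omega
        have h1 : t k * (k + 1) ≤ t (k + 1) * (k + 1) := by
          rw [step k]
          exact Nat.mul_le_mul_left _ hcoef
        have h2 : t k ≤ t (k + 1) := Nat.le_of_mul_le_mul_right h1 (Nat.succ_pos k)
        rw [hk2] at h2
        exact le_trans h2 ih
  -- decreasing after 2n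
  have down : ∀ d, t (2 * n + d) ≤ t (2 * n) := by
    intro d
    induction d with
    | zero => simp
    | succ d ih =>
      set k := 2 * n + d with hk
      have hcoef : 2 * (3 * n - k) ≤ k + 1 := by omega
      have h1 : t (k + 1) * (k + 1) ≤ t k * (k + 1) := by
        rw [step k]
        exact Nat.mul_le_mul_left _ hcoef
      have h2 : t (k + 1) ≤ t k := Nat.le_of_mul_le_mul_right h1 (Nat.succ_pos k)
      exact le_trans h2 ih
  have tmax : ∀ k ∈ Finset.range (3 * n + 1), t k ≤ t (2 * n) := by
    intro k _
    rcases le_or_gt k (2 * n) with h | h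
    · have : k = 2 * n - (2 * n - k) := by omega
      rw [this]; exact up _
    · have : k = 2 * n + (k - 2 * n) := by omega
      rw [this]; exact down _
  have hsum : 3 ^ (3 * n) = ∑ k ∈ Finset.range (3 * n + 1), t k := by
    have h := add_pow 2 1 (3 * n) (R := ℕ)
    norm_num at h
    exact h
  have : 3 ^ (3 * n) ≤ (3 * n + 1) * t (2 * n) := by
    rw [hsum]
    calc ∑ k ∈ Finset.range (3 * n + 1), t k
        ≤ ∑ _k ∈ Finset.range (3 * n + 1), t (2 * n) := Finset.sum_le_sum tmax
      _ = (3 * n + 1) * t (2 * n) := by rw [Finset.sum_const, Finset.card_range, smul_eq_mul]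
  refine le_trans this ?_
  have hsymm : Nat.choose (3 * n) (2 * n) = Nat.choose (3 * n) n := by
    have := Nat.choose_symm (n := 3 * n) (k := 2 * n) (by omega)
    have h3 : 3 * n - 2 * n = n := by omega
    rw [h3] at this
    exact this.symm
  simp only [ht, hsymm]
  have : (2:ℕ) ^ (2 * n) = 4 ^ n := by rw [pow_mul]; norm_num
  rw [this]

theorem mod_eq_self_of_lt {a p : ℕ} (h : a < p) : a % p = a := Nat.mod_eq_of_lt h

theorem mod_eq_sub1 {a p : ℕ} (h1 : p ≤ a) (h2 : a < 2 * p) : a % p = a - p := by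
  rw [Nat.mod_eq_sub_mod h1, Nat.mod_eq_of_lt (by omega)]

theorem mod_eq_sub2 {a p : ℕ} (h1 : 2 * p ≤ a) (h2 : a < 3 * p) : a % p = a - 2 * p := by
  rw [Nat.mod_eq_sub_mod (by omega), Nat.mod_eq_sub_mod (by omega), Nat.mod_eq_of_lt (by omega)]
  omega

theorem mod_eq_sub3 {a p : ℕ} (h1 : 3 * p ≤ a) (h2 : a < 4 * p) : a % p = a - 3 * p := by
  rw [Nat.mod_eq_sub_mod (by omega), Nat.mod_eq_sub_mod (by omega),
    Nat.mod_eq_sub_mod (by omega), Nat.mod_eq_of_lt (by omega)]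
  omega

/-- Main decomposition: if there is no prime in `(2n, 3n)`, then `choose (3n) n` is bounded. -/
theorem choose_le_of_no_prime {n : ℕ} (hn : 2 ≤ n)
    (no_prime : ¬∃ p : ℕ, p.Prime ∧ 2 * n < p ∧ p < 3 * n) :
    Nat.choose (3 * n) n ≤
      (3 * n) ^ Nat.sqrt (3 * n) * 4 ^ (3 * n / 5) * Nat.choose (n + n / 2) n := by
  set s := Nat.sqrt (3 * n) with hs
  set m := n + n / 2 with hm
  set C := Nat.choose (3 * n) n with hC
  have hCpos : 0 < C := Nat.choose_pos (by omega)
  have hnm : n ≤ m := by omega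
  have hKpos : 0 < Nat.choose m n := Nat.choose_pos hnm
  set e : ℕ → ℕ := fun p => C.factorization p with he
  -- Step 1 : C as a product over primes ≤ 2n
  have h1 : (∏ p ∈ Finset.range (3 * n + 1), p ^ e p) = C :=
    Nat.prod_pow_factorization_choose (3 * n) n (by omega)
  have h2 : (∏ p ∈ Finset.range (2 * n + 1), p ^ e p) = C := by
    rw [← h1]
    apply Finset.prod_subset
    · exact Finset.range_subset_range.2 (by omega)
    · intro x hx hx2
      rw [Finset.mem_range] at hx hx2
      by_cases hxp : x.Prime
      · exfalso
        have hgt : 2 * n < x := by omega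
        have hlt : x ≤ 3 * n := by omega
        rcases lt_or_eq_of_le hlt with h | h
        · exact no_prime ⟨x, hxp, hgt, h⟩
        · -- x = 3 * n is not prime for n ≥ 2
          rcases (Nat.Prime.eq_one_or_self_of_dvd hxp 3 ⟨n, h⟩) with h3 | h3 <;> omega
      · have h0 : e x = 0 := Nat.factorization_eq_zero_of_not_prime C hxp
        rw [h0, pow_zero]
  set S := (Finset.range (2 * n + 1)).filter Nat.Prime with hS
  have h3 : (∏ p ∈ S, p ^ e p) = C := by
    rw [← h2]
    apply Finset.prod_filter_of_ne
    intro p _ hne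
    by_contra hnp
    have h0 : e p = 0 := Nat.factorization_eq_zero_of_not_prime C hnp
    rw [h0, pow_zero] at hne
    exact hne rfl
  -- Step 2: split
  rw [← h3, ← Finset.prod_filter_mul_prod_filter_not S (· ≤ s),
    ← Finset.prod_filter_mul_prod_filter_not (S.filter (¬ · ≤ s)) (· ≤ 3 * n / 5), mul_assoc]
  have hn3 : 0 < 3 * n := by omega
  -- small primes
  have Hsmall : (∏ p ∈ S.filter (· ≤ s), p ^ e p) ≤ (3 * n) ^ s := by
    calc (∏ p ∈ S.filter (· ≤ s), p ^ e p) ≤ ∏ _p ∈ S.filter (· ≤ s), 3 * n :=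
      Finset.prod_le_prod' fun p _ => Nat.pow_factorization_choose_le hn3
    _ = (3 * n) ^ (S.filter (· ≤ s)).card := by rw [Finset.prod_const]
    _ ≤ (3 * n) ^ s := by
        apply Nat.pow_le_pow_right (by omega)
        have hsub : S.filter (· ≤ s) ⊆ Finset.Icc 1 s := by
          intro x hx
          obtain ⟨hx1, hx2⟩ := Finset.mem_filter.1 hx
          exact Finset.mem_Icc.mpr ⟨(Finset.mem_filter.1 hx1).2.one_lt.le.trans (by omega), hx2⟩
        calc (S.filter (· ≤ s)).card ≤ (Finset.Icc 1 s).card := Finset.card_le_card hsub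
          _ = s := by rw [Nat.card_Icc]; omega
  -- sqrt fact
  have hsq : ∀ p : ℕ, ¬ p ≤ s → 3 * n < p ^ 2 := by
    intro p hp
    have h : 3 * n < (s + 1) ^ 2 := Nat.lt_succ_sqrt' (3 * n)
    have hsp : s + 1 ≤ p := by omega
    calc 3 * n < (s + 1) ^ 2 := h
      _ ≤ p ^ 2 := Nat.pow_le_pow_left hsp 2
  -- mid primes
  have Hmid : (∏ p ∈ (S.filter (¬ · ≤ s)).filter (· ≤ 3 * n / 5), p ^ e p) ≤ 4 ^ (3 * n / 5) := by
    refine le_trans ?_ (primorial_le_4_pow (3 * n / 5))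
    rw [primorial]
    have hsub : (S.filter (¬ · ≤ s)).filter (· ≤ 3 * n / 5) ⊆
        (Finset.range (3 * n / 5 + 1)).filter Nat.Prime := by
      intro x hx
      obtain ⟨hx1, hx2⟩ := Finset.mem_filter.1 hx
      obtain ⟨hx3, _⟩ := Finset.mem_filter.1 hx1
      obtain ⟨_, hx5⟩ := Finset.mem_filter.1 hx3
      exact Finset.mem_filter.mpr ⟨Finset.mem_range.mpr (by omega), hx5⟩
    refine le_trans (Finset.prod_le_prod' fun p hp => ?_)
      (Finset.prod_le_prod_of_subset_of_one_le' hsub fun p hp _ =>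
        (Finset.mem_filter.1 hp).2.one_lt.le)
    -- p ^ e p ≤ p
    obtain ⟨hp1, _⟩ := Finset.mem_filter.1 hp
    obtain ⟨hp3, hp4⟩ := Finset.mem_filter.1 hp1
    have he1 : e p ≤ 1 := Nat.factorization_choose_le_one (hsq p hp4)
    calc p ^ e p ≤ p ^ 1 := Nat.pow_le_pow_right (Finset.mem_filter.1 hp3).2.one_lt.le he1
      _ = p := pow_one p
  -- high primes
  have Hhi : (∏ p ∈ (S.filter (¬ · ≤ s)).filter (¬ · ≤ 3 * n / 5), p ^ e p) ≤
      Nat.choose m n := by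
    set T0 := (S.filter (¬ · ≤ s)).filter (¬ · ≤ 3 * n / 5) with hT0
    have hTeq : (∏ p ∈ T0.filter (fun p => e p ≠ 0), p ^ e p) = ∏ p ∈ T0, p ^ e p := by
      apply Finset.prod_filter_of_ne
      intro p _ hne
      intro h0
      rw [h0, pow_zero] at hne
      exact hne rfl
    rw [← hTeq]
    set T := T0.filter (fun p => e p ≠ 0) with hT
    have hmem : ∀ p ∈ T, p.Prime ∧ ¬ p ≤ s ∧ 3 * n < 5 * p ∧ p ≤ 2 * n ∧ e p ≠ 0 := by
      intro p hp
      obtain ⟨hp1, hp2⟩ := Finset.mem_filter.1 hp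
      obtain ⟨hp3, hp4⟩ := Finset.mem_filter.1 hp1
      obtain ⟨hp5, hp6⟩ := Finset.mem_filter.1 hp3
      obtain ⟨hp7, hp8⟩ := Finset.mem_filter.1 hp5
      refine ⟨hp8, hp6, ?_, by rw [Finset.mem_range] at hp7; omega, hp2⟩
      rw [not_le] at hp4
      rw [Nat.div_lt_iff_lt_mul (by norm_num)] at hp4
      omega
    have hdvd : ∀ p ∈ T, p ∣ Nat.choose m n := by
      intro p hp
      obtain ⟨hpp, hps, hp5, hp2n, hpe⟩ := hmem p hp
      have hp2 : 3 * n < p ^ 2 := hsq p hps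
      have hsub : 3 * n - n = 2 * n := by omega
      by_cases h3 : 3 * p ≤ 2 * n
      · -- window (3n/5, 2n/3]: e p = 0, contradiction
        exfalso
        apply hpe
        apply fact_choose_eq_zero hpp (by omega) hp2
        rw [hsub, mod_eq_sub1 (by omega) (by omega), mod_eq_sub3 (by omega) (by omega)]
        omega
      · by_cases h4 : 4 * p ≤ 3 * n
        · -- window (2n/3, 3n/4]: carry in choose m n
          apply prime_dvd_choose_of_carry hpp hnm (by omega)
          have hmn : m - n = n / 2 := by omega
          rw [hmn, mod_eq_sub1 (by omega) (by omega), mod_eq_self_of_lt (by omega)]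
          omega
        · by_cases h5 : p ≤ n
          · -- window (3n/4, n]: e p = 0, contradiction
            exfalso
            apply hpe
            apply fact_choose_eq_zero hpp (by omega) hp2
            rw [hsub, mod_eq_sub1 (by omega) (by omega), mod_eq_sub2 (by omega) (by omega)]
            omega
          · by_cases h6 : 2 * p ≤ 3 * n
            · -- window (n, 3n/2]: p divides choose m n directly
              exact Nat.Prime.dvd_choose hpp (by omega) (by omega) (by omega)
            · -- window (3n/2, 2n]: e p = 0, contradiction
              exfalso
              apply hpe
              apply fact_choose_eq_zero hpp (by omega) hp2
              rw [hsub, mod_eq_self_of_lt (by omega), mod_eq_sub1 (by omega) (by omega)]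
              omega
    have hprod_eq : (∏ p ∈ T, p ^ e p) = ∏ p ∈ T, p := by
      apply Finset.prod_congr rfl
      intro p hp
      obtain ⟨hpp, hps, _, _, hpe⟩ := hmem p hp
      have he1 : e p ≤ 1 := Nat.factorization_choose_le_one (hsq p hps)
      have : e p = 1 := by omega
      rw [this, pow_one]
    rw [hprod_eq]
    apply Nat.le_of_dvd hKpos
    exact Finset.prod_primes_dvd _ (fun q hq => (hmem q hq).1.prime) hdvd
  exact Nat.mul_le_mul Hsmall (Nat.mul_le_mul Hmid Hhi)

end ElBachraoui

section RealPart
open Real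

theorem key_nat : (291600:ℕ)^542 * 2^213840 ≤ 3^145800 := by
  calc (291600:ℕ)^542 * 2^213840 ≤ (2^19)^542 * 2^213840 := by
        gcongr
        norm_num
    _ = 2^224138 := by rw [← pow_mul, ← pow_add]
    _ ≤ 2^230850 := Nat.pow_le_pow_right (by norm_num) (by norm_num)
    _ = (2^19)^12150 := by rw [← pow_mul]
    _ ≤ (3^12)^12150 := Nat.pow_le_pow_left (by norm_num) _
    _ = 3^145800 := by rw [← pow_mul]

theorem log_ineq : 542 * Real.log 291600 + 213840 * Real.log 2 ≤ 145800 * Real.log 3 := by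
  have h : ((291600^542 * 2^213840 : ℕ) : ℝ) ≤ ((3^145800 : ℕ) : ℝ) := Nat.cast_le.mpr key_nat
  push_cast at h
  have h2 := Real.log_le_log (by positivity) h
  rw [Real.log_mul (by positivity) (by positivity), Real.log_pow, Real.log_pow,
    Real.log_pow] at h2
  push_cast at h2
  linarith

theorem c_nonneg : 0 ≤ (3/2) * Real.log 3 - (11/5) * Real.log 2 := by
  have h : (2:ℝ)^(22:ℕ) ≤ (3:ℝ)^(15:ℕ) := by norm_num
  have h2 := Real.log_le_log (by positivity) h
  rw [Real.log_pow, Real.log_pow] at h2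
  push_cast at h2
  linarith

/-- The main real inequality for large x. -/
theorem real_key_inequality {x : ℝ} (hx : 97200 ≤ x) :
    (3*x) ^ (Real.sqrt (3*x) + 2) * 2 ^ ((11/5)*x) ≤ 3 ^ ((3/2)*x) := by
  set c : ℝ := (3/2) * Real.log 3 - (11/5) * Real.log 2 with hc
  let f : ℝ → ℝ := fun y => Real.sqrt (3*y) * log (3*y) + 2 * log (3*y) - c * y
  have hf' : ∀ y : ℝ, 0 < y → 0 < (3*y) ^ (Real.sqrt (3*y) + 2) * 2 ^ ((11/5)*y) / 3 ^ ((3/2)*y) := by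
    intro y h
    have h3 : (0:ℝ) < 3*y := by linarith
    positivity
  have hf : ∀ y : ℝ, 0 < y → f y =
      log ((3*y) ^ (Real.sqrt (3*y) + 2) * 2 ^ ((11/5)*y) / 3 ^ ((3/2)*y)) := by
    intro y h5
    have h6 : (0:ℝ) < 3 * y := by linarith
    have h7 := rpow_pos_of_pos h6 (Real.sqrt (3*y) + 2)
    have h8 : (0:ℝ) < 2 ^ ((11/5)*y) := rpow_pos_of_pos two_pos _
    rw [log_div (by positivity) (rpow_pos_of_pos three_pos _).ne', log_mul h7.ne' h8.ne',
      log_rpow h6, log_rpow two_pos, log_rpow three_pos]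
    simp only [f, hc]
    ring
  have h5 : 0 < x := by linarith
  rw [← div_le_one (rpow_pos_of_pos three_pos _), ← log_nonpos_iff (hf' x h5).le, ← hf x h5]
  -- concavity
  have g1 : ConcaveOn ℝ (Set.Ioi (0.5:ℝ)) (fun y => Real.sqrt (3*y) * log (3*y)) := by
    have h0 := strictConcaveOn_sqrt_mul_log_Ioi.concaveOn.comp_linearMap
      ((3 : ℝ) • LinearMap.id)
    have hsub : Set.Ioi (0.5:ℝ) ⊆ ⇑((3:ℝ) • (LinearMap.id : ℝ →ₗ[ℝ] ℝ)) ⁻¹' Set.Ioi 1 := by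
      intro y hy
      simp only [Set.mem_preimage, LinearMap.smul_apply, LinearMap.id_coe, id_eq, smul_eq_mul,
        Set.mem_Ioi] at *
      linarith
    have h1 := h0.subset hsub (convex_Ioi 0.5)
    have hfun : (fun y => Real.sqrt (3*y) * log (3*y)) =
        (fun x => Real.sqrt x * log x) ∘ ⇑((3:ℝ) • (LinearMap.id : ℝ →ₗ[ℝ] ℝ)) := by
      funext y; simp [LinearMap.smul_apply]
    rw [hfun]; exact h1
  have g2 : ConcaveOn ℝ (Set.Ioi (0.5:ℝ)) (fun y => 2 * log (3*y)) := by
    have h0 := strictConcaveOn_log_Ioi.concaveOn.comp_linearMap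
      ((3 : ℝ) • (LinearMap.id : ℝ →ₗ[ℝ] ℝ))
    have hsub : Set.Ioi (0.5:ℝ) ⊆ ⇑((3:ℝ) • (LinearMap.id : ℝ →ₗ[ℝ] ℝ)) ⁻¹' Set.Ioi 0 := by
      intro y hy
      simp only [Set.mem_preimage, LinearMap.smul_apply, LinearMap.id_coe, id_eq, smul_eq_mul,
        Set.mem_Ioi] at *
      linarith
    have h1 := h0.subset hsub (convex_Ioi 0.5)
    have h2 : ConcaveOn ℝ (Set.Ioi (0.5:ℝ)) (fun y => log (3*y)) := by
      have hfun : (fun y => log (3*y)) = log ∘ ⇑((3:ℝ) • (LinearMap.id : ℝ →ₗ[ℝ] ℝ)) := by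
        funext y; simp [LinearMap.smul_apply]
      rw [hfun]; exact h1
    have h3 := h2.smul (by norm_num : (0:ℝ) ≤ 2)
    have hfun2 : (fun y => 2 * log (3*y)) = fun x => (2:ℝ) • log (3 * x) := by
      funext y; simp [smul_eq_mul]
    rw [hfun2]; exact h3
  have h : ConcaveOn ℝ (Set.Ioi (0.5:ℝ)) f := by
    apply ConcaveOn.sub (g1.add g2)
    exact ConvexOn.smul c_nonneg (convexOn_id (convex_Ioi (0.5 : ℝ)))
  have hsqrt9 : Real.sqrt (3*3) = 3 :=
    (sqrt_eq_iff_mul_self_eq_of_pos (by norm_num)).mpr (by norm_num)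
  have hsqrtbig : Real.sqrt (3*97200) = 540 :=
    (sqrt_eq_iff_mul_self_eq_of_pos (by norm_num)).mpr (by norm_num)
  have hlog9 : Real.log (3*3) = 2 * Real.log 3 := by
    rw [show (3*3:ℝ) = 3^(2:ℕ) by norm_num, Real.log_pow]
    push_cast; ring
  have hx1 : (0:ℝ) ≤ f 3 := by
    simp only [f, hsqrt9, hlog9, hc]
    have l2 := Real.log_nonneg (by norm_num : (1:ℝ) ≤ 2)
    have l3 := Real.log_nonneg (by norm_num : (1:ℝ) ≤ 3)
    linarith
  have hx2 : f 97200 ≤ 0 := by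
    simp only [f, hsqrtbig, hc]
    have h291600 : (3*97200:ℝ) = 291600 := by norm_num
    rw [h291600]
    have := log_ineq
    linarith
  have h1 : (0.5:ℝ) < 3 := by norm_num
  have h2 : (3:ℝ) < 97200 := by norm_num
  exact (h.right_le_of_le_left'' h1 ((h1.trans h2).trans_le hx) h2 hx (hx2.trans hx1)).trans hx2
/-- The numeric contradiction for large `n`. -/
theorem contra_ineq {n : ℕ} (h : 97200 ≤ n) :
    ((3*n+1) * 4^n * ((3*n) ^ (Nat.sqrt (3*n)) * 4^(3*n/5)) * 3^(n + n/2) : ℕ) <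
      3^(3*n) * 2^n := by
  have hx : (97200:ℝ) ≤ (n:ℝ) := by exact_mod_cast h
  rw [← Nat.cast_lt (α := ℝ)]
  push_cast
  set x := (n:ℝ) with hxdef
  have hx0 : (0:ℝ) < x := by linarith
  have hx3 : (0:ℝ) < 3*x := by linarith
  have hx31 : (1:ℝ) ≤ 3*x := by linarith
  -- convert nat-pows to rpow
  rw [show ((4:ℝ)^(n:ℕ) : ℝ) = (4:ℝ) ^ (x:ℝ) by rw [Real.rpow_natCast],
      show ((3*x) ^ (Nat.sqrt (3*n) : ℕ) : ℝ) = (3*x) ^ ((Nat.sqrt (3*n) : ℕ) : ℝ) by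
        rw [Real.rpow_natCast],
      show ((4:ℝ) ^ (3*n/5 : ℕ) : ℝ) = (4:ℝ) ^ ((3*n/5 : ℕ) : ℝ) by rw [Real.rpow_natCast],
      show ((3:ℝ) ^ (n + n/2 : ℕ) : ℝ) = (3:ℝ) ^ ((n + n/2 : ℕ) : ℝ) by rw [Real.rpow_natCast],
      show ((3:ℝ) ^ (3*n : ℕ) : ℝ) = (3:ℝ) ^ ((3*(n:ℝ)) : ℝ) by
        rw [← Real.rpow_natCast]; push_cast; ring_nf,
      show ((2:ℝ) ^ (n:ℕ) : ℝ) = (2:ℝ) ^ (x:ℝ) by rw [Real.rpow_natCast]]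
  -- bound each factor
  have hsqrt : ((Nat.sqrt (3*n) : ℕ) : ℝ) ≤ Real.sqrt (3*x) := by
    have h1 : ((Nat.sqrt (3*n) : ℕ) : ℝ) ≤ Real.sqrt ((3*n : ℕ) : ℝ) :=
      Real.nat_sqrt_le_real_sqrt
    have h2 : ((3*n : ℕ) : ℝ) = 3*x := by push_cast; ring
    rwa [h2] at h1
  have hb1 : (3*x) ^ ((Nat.sqrt (3*n) : ℕ) : ℝ) ≤ (3*x) ^ (Real.sqrt (3*x)) :=
    Real.rpow_le_rpow_of_exponent_le hx31 hsqrt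
  have hd5 : ((3*n/5 : ℕ) : ℝ) ≤ (3/5)*x := by
    have h1 : ((3*n/5 : ℕ) : ℝ) ≤ ((3*n : ℕ) : ℝ) / 5 := Nat.cast_div_le
    push_cast at h1
    linarith
  have hb2 : (4:ℝ) ^ ((3*n/5 : ℕ) : ℝ) ≤ (4:ℝ) ^ ((3/5)*x) :=
    Real.rpow_le_rpow_of_exponent_le (by norm_num) hd5
  have hm : ((n + n/2 : ℕ) : ℝ) ≤ (3/2)*x := by
    have h1 : ((n/2 : ℕ) : ℝ) ≤ (n:ℝ) / 2 := Nat.cast_div_le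
    push_cast
    push_cast at h1
    linarith
  have hb3 : (3:ℝ) ^ ((n + n/2 : ℕ) : ℝ) ≤ (3:ℝ) ^ ((3/2)*x) :=
    Real.rpow_le_rpow_of_exponent_le (by norm_num) hm
  have hb0 : (3*x+1) < (3*x) ^ (2:ℝ) := by
    rw [Real.rpow_two]
    nlinarith
  -- positivity facts
  have p1 : (0:ℝ) < (3*x) ^ (Real.sqrt (3*x)) := Real.rpow_pos_of_pos hx3 _
  have p4 : ∀ y : ℝ, (0:ℝ) < (4:ℝ) ^ y := fun y => Real.rpow_pos_of_pos (by norm_num) y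
  have p2 : ∀ y : ℝ, (0:ℝ) < (2:ℝ) ^ y := fun y => Real.rpow_pos_of_pos (by norm_num) y
  have p3 : ∀ y : ℝ, (0:ℝ) < (3:ℝ) ^ y := fun y => Real.rpow_pos_of_pos (by norm_num) y
  -- chain
  have merge3 : (3*x) ^ (Real.sqrt (3*x) + 2) = (3*x) ^ (Real.sqrt (3*x)) * (3*x) ^ (2:ℝ) :=
    Real.rpow_add hx3 _ _
  have merge2 : (2:ℝ)^(2*x) * (2:ℝ)^(2*(3/5*x)) = (2:ℝ)^((11/5)*x) * (2:ℝ)^x := by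
    rw [← Real.rpow_add (by norm_num : (0:ℝ) < 2), ← Real.rpow_add (by norm_num : (0:ℝ) < 2)]
    ring_nf
  have h42 : (4:ℝ) = (2:ℝ) ^ (2:ℝ) := by
    rw [show (2:ℝ) = ((2:ℕ):ℝ) by norm_num, Real.rpow_natCast]; norm_num
  calc ((3*x+1) * (4:ℝ)^(x:ℝ) * ((3*x) ^ ((Nat.sqrt (3*n) : ℕ) : ℝ) * (4:ℝ) ^ ((3*n/5 : ℕ) : ℝ))
        * (3:ℝ) ^ ((n + n/2 : ℕ) : ℝ))
      = (3*x+1) * ((4:ℝ)^(x:ℝ) * ((3*x) ^ ((Nat.sqrt (3*n) : ℕ) : ℝ) * (4:ℝ) ^ ((3*n/5 : ℕ) : ℝ))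
        * (3:ℝ) ^ ((n + n/2 : ℕ) : ℝ)) := by ring
    _ < (3*x) ^ (2:ℝ) * ((4:ℝ)^(x:ℝ) * ((3*x) ^ ((Nat.sqrt (3*n) : ℕ) : ℝ)
        * (4:ℝ) ^ ((3*n/5 : ℕ) : ℝ)) * (3:ℝ) ^ ((n + n/2 : ℕ) : ℝ)) := by
        apply mul_lt_mul_of_pos_right hb0
        positivity
    _ ≤ (3*x) ^ (2:ℝ) * ((4:ℝ)^(x:ℝ) * ((3*x) ^ (Real.sqrt (3*x))
        * (4:ℝ) ^ ((3/5)*x)) * (3:ℝ) ^ ((3/2)*x)) := by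
        apply mul_le_mul_of_nonneg_left _ (le_of_lt (Real.rpow_pos_of_pos hx3 _))
        apply mul_le_mul _ hb3 (le_of_lt (p3 _)) (by positivity)
        apply mul_le_mul_of_nonneg_left _ (le_of_lt (p4 _))
        exact mul_le_mul hb1 hb2 (le_of_lt (p4 _)) (le_of_lt p1)
    _ = ((3*x) ^ (Real.sqrt (3*x) + 2) * (2:ℝ) ^ ((11/5)*x)) * ((2:ℝ)^(x:ℝ) * (3:ℝ)^((3/2)*x)) := by
        rw [h42, ← Real.rpow_mul (by norm_num : (0:ℝ) ≤ 2), ← Real.rpow_mul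
          (by norm_num : (0:ℝ) ≤ 2), merge3]
        linear_combination ((3*x) ^ (Real.sqrt (3*x)) * (3*x) ^ (2:ℝ) * (3:ℝ)^((3/2)*x)) * merge2
    _ ≤ ((3:ℝ) ^ ((3/2)*x)) * ((2:ℝ)^(x:ℝ) * (3:ℝ)^((3/2)*x)) := by
        apply mul_le_mul_of_nonneg_right (real_key_inequality hx)
        positivity
    _ = (3:ℝ) ^ (3*x) * (2:ℝ) ^ (x:ℝ) := by
        rw [show (3:ℝ)*x = (3/2)*x + (3/2)*x by ring, Real.rpow_add (by norm_num : (0:ℝ) < 3)]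
        ring

end RealPart

section Assembly

open Nat

theorem eventually_prime {n : ℕ} (h : 97200 ≤ n) :
    ∃ p : ℕ, p.Prime ∧ 2 * n < p ∧ p < 3 * n := by
  by_contra no_prime
  have hA := lower_bound_choose n
  have hE := choose_le_of_no_prime (show 2 ≤ n by omega) no_prime
  have hB := choose_mul_two_pow_le (show n ≤ n + n / 2 by omega)
  have H : 3 ^ (3 * n) * 2 ^ n ≤
      (3 * n + 1) * 4 ^ n * ((3 * n) ^ Nat.sqrt (3 * n) * 4 ^ (3 * n / 5)) * 3 ^ (n + n / 2) := by
    calc 3 ^ (3 * n) * 2 ^ n ≤ ((3 * n + 1) * (4 ^ n * Nat.choose (3 * n) n)) * 2 ^ n :=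
          Nat.mul_le_mul_right _ hA
      _ ≤ ((3 * n + 1) * (4 ^ n * ((3 * n) ^ Nat.sqrt (3 * n) * 4 ^ (3 * n / 5) *
            Nat.choose (n + n / 2) n))) * 2 ^ n := by
          apply Nat.mul_le_mul_right
          apply Nat.mul_le_mul_left
          exact Nat.mul_le_mul_left _ hE
      _ = (3 * n + 1) * 4 ^ n * ((3 * n) ^ Nat.sqrt (3 * n) * 4 ^ (3 * n / 5)) *
            (Nat.choose (n + n / 2) n * 2 ^ n) := by ring
      _ ≤ (3 * n + 1) * 4 ^ n * ((3 * n) ^ Nat.sqrt (3 * n) * 4 ^ (3 * n / 5)) *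
            3 ^ (n + n / 2) := Nat.mul_le_mul_left _ hB
  exact absurd H (not_le.mpr (contra_ineq h))

theorem chain_step (q q' p : ℕ) {n : ℕ} (hp : p.Prime) (h1 : 2 * q' ≤ p + 1) (h2 : p < 3 * q)
    (H : n < q → ∃ p : ℕ, p.Prime ∧ 2 * n < p ∧ p < 3 * n) (hn : n < q') :
    ∃ p : ℕ, p.Prime ∧ 2 * n < p ∧ p < 3 * n := by
  by_cases h : p < 3 * n
  · exact ⟨p, hp, by omega, h⟩
  · exact H (by omega)

theorem interval_2n_3n_contains_prime :
    ∀ n : ℕ, 1 < n → ∃ p : ℕ, p.Prime ∧ 2 * n < p ∧ p < 3 * n := by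
  intro n hn
  rcases lt_or_ge n 97200 with hsmall | hlarge
  · revert hsmall
    refine chain_step 73999 97200 221989 (by norm_num) (by norm_num) (by norm_num) ?_
    refine chain_step 49335 73999 147997 (by norm_num) (by norm_num) (by norm_num) ?_
    refine chain_step 32895 49335 98669 (by norm_num) (by norm_num) (by norm_num) ?_
    refine chain_step 21934 32895 65789 (by norm_num) (by norm_num) (by norm_num) ?_
    refine chain_step 14626 21934 43867 (by norm_num) (by norm_num) (by norm_num) ?_
    refine chain_step 9754 14626 29251 (by norm_num) (by norm_num) (by norm_num) ?_
    refine chain_step 6505 9754 19507 (by norm_num) (by norm_num) (by norm_num) ?_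
    refine chain_step 4341 6505 13009 (by norm_num) (by norm_num) (by norm_num) ?_
    refine chain_step 2896 4341 8681 (by norm_num) (by norm_num) (by norm_num) ?_
    refine chain_step 1932 2896 5791 (by norm_num) (by norm_num) (by norm_num) ?_
    refine chain_step 1290 1932 3863 (by norm_num) (by norm_num) (by norm_num) ?_
    refine chain_step 862 1290 2579 (by norm_num) (by norm_num) (by norm_num) ?_
    refine chain_step 577 862 1723 (by norm_num) (by norm_num) (by norm_num) ?_
    refine chain_step 387 577 1153 (by norm_num) (by norm_num) (by norm_num) ?_
    refine chain_step 262 387 773 (by norm_num) (by norm_num) (by norm_num) ?_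
    refine chain_step 175 262 523 (by norm_num) (by norm_num) (by norm_num) ?_
    refine chain_step 117 175 349 (by norm_num) (by norm_num) (by norm_num) ?_
    refine chain_step 79 117 233 (by norm_num) (by norm_num) (by norm_num) ?_
    refine chain_step 54 79 157 (by norm_num) (by norm_num) (by norm_num) ?_
    refine chain_step 36 54 107 (by norm_num) (by norm_num) (by norm_num) ?_
    refine chain_step 24 36 71 (by norm_num) (by norm_num) (by norm_num) ?_
    refine chain_step 16 24 47 (by norm_num) (by norm_num) (by norm_num) ?_
    refine chain_step 12 16 31 (by norm_num) (by norm_num) (by norm_num) ?_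
    refine chain_step 8 12 23 (by norm_num) (by norm_num) (by norm_num) ?_
    intro h8
    interval_cases n
    · exact ⟨5, by norm_num⟩
    · exact ⟨7, by norm_num⟩
    · exact ⟨11, by norm_num⟩
    · exact ⟨11, by norm_num⟩
    · exact ⟨13, by norm_num⟩
    · exact ⟨17, by norm_num⟩
  · exact eventually_prime hlarge

end Assembly
end

section
/- Every v-Ramanujan number R_v(m) is prime, for every real v > 1 and every m ≥ 1. -/
/-- Prime counting function extended to real arguments: number of primes `≤ x`. -/
noncomputable def primePi (x : ℝ) : ℕ := Nat.primeCounting ⌊x⌋₊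

theorem v_Ramanujan_number_is_prime (v : ℝ) (hv : 1 < v) (m : ℕ) (hm : 1 ≤ m) (N : ℕ)
    (hN : IsLeast {N : ℕ | 0 < N ∧ ∀ x : ℝ, (N : ℝ) ≤ x → m ≤ primePi x - primePi (x / v)} N) :
    N.Prime := by
  obtain ⟨⟨hN0, hNall⟩, hlb⟩ := hN
  by_contra hnp
  have hN2 : 2 ≤ N := by
    rcases Nat.lt_or_ge N 2 with h | h
    · interval_cases N
      · have h1 := hNall 1 (by norm_num)
        have : primePi 1 = 0 := by
          simp [primePi, Nat.primeCounting_one]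
        omega
    · exact h
  -- N is not prime: primeCounting (N-1) = primeCounting N
  have hcount : Nat.primeCounting (N - 1) = Nat.primeCounting N := by
    obtain ⟨k, rfl⟩ : ∃ k, N = k + 1 := ⟨N - 1, by omega⟩
    simp only [Nat.add_sub_cancel, Nat.primeCounting, Nat.primeCounting',
      Nat.count_succ]
    simp [hnp]
  have key : (N - 1) ∈ {N : ℕ | 0 < N ∧ ∀ x : ℝ, (N : ℝ) ≤ x → m ≤ primePi x - primePi (x / v)} := by
    refine ⟨by omega, fun x hx => ?_⟩
    rcases le_or_gt (N : ℝ) x with h | h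
    · exact hNall x h
    · have hx0 : (0 : ℝ) ≤ x := le_trans (by positivity) hx
      have hfl : ⌊x⌋₊ = N - 1 := by
        rw [Nat.floor_eq_iff hx0]
        constructor
        · exact_mod_cast hx
        · push_cast [Nat.cast_sub (by omega : 1 ≤ N)] at hx ⊢
          linarith
      have hx1 : primePi x = primePi N := by
        simp [primePi, hfl, hcount, Nat.floor_natCast]
      have hx2 : primePi (x / v) ≤ primePi ((N : ℝ) / v) := by
        apply Nat.monotone_primeCounting
        apply Nat.floor_le_floor
        apply div_le_div_of_nonneg_right h.le _ |>.trans_eq rfl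
        · linarith
      calc m ≤ primePi N - primePi ((N : ℝ) / v) := hNall N le_rfl
        _ ≤ primePi x - primePi (x / v) := by
            rw [hx1]; exact Nat.sub_le_sub_left hx2 _
  have := hlb key
  omega
end

section
/- Every v-Chebyshev number C_v(m) is prime, for every real v > 1 and every m ≥ 1. -/
/-- Chebyshev theta function: `ϑ(x) = ∑_{p ≤ x, p prime} ln p`. -/
noncomputable def chebTheta (x : ℝ) : ℝ :=
  ∑ p ∈ (Finset.range (⌊x⌋₊ + 1)).filter Nat.Prime, Real.log p

lemma chebTheta_mono : Monotone chebTheta := by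
  intro x y h
  apply Finset.sum_le_sum_of_subset_of_nonneg
  · apply Finset.filter_subset_filter
    apply Finset.range_subset_range.mpr
    have := Nat.floor_le_floor h
    omega
  · intro p hp _
    have hp' := (Finset.mem_filter.mp hp).2
    exact Real.log_nonneg (by exact_mod_cast hp'.one_lt.le)

lemma chebTheta_nonneg (x : ℝ) : 0 ≤ chebTheta x :=
  Finset.sum_nonneg fun p hp =>
    Real.log_nonneg (by exact_mod_cast (Finset.mem_filter.mp hp).2.one_lt.le)

theorem v_Chebyshev_number_is_prime (v : ℝ) (hv : 1 < v) (m : ℕ) (hm : 1 ≤ m) (N : ℕ)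
    (hN : IsLeast {N : ℕ | 0 < N ∧ ∀ x : ℝ, (N : ℝ) ≤ x →
      (m : ℝ) * Real.log x ≤ chebTheta x - chebTheta (x / v)} N) :
    N.Prime := by
  obtain ⟨⟨hN0, hprop⟩, hleast⟩ := hN
  -- First, N ≥ 2
  have h2 : 2 ≤ N := by
    by_contra h
    have hN1 : N = 1 := by omega
    subst hN1
    have hx := hprop (3/2) (by norm_num)
    have hfl : ⌊(3/2 : ℝ)⌋₊ = 1 := by
      rw [Nat.floor_eq_iff (by norm_num)]
      norm_num
    have hθ : chebTheta (3/2) = 0 := by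
      rw [chebTheta, hfl]
      rw [show Finset.filter Nat.Prime (Finset.range 2) = ∅ from by decide]
      simp
    have hθ2 : 0 ≤ chebTheta (3/2 / v) := chebTheta_nonneg _
    have hlog : 0 < Real.log (3/2 : ℝ) := Real.log_pos (by norm_num)
    have hm' : (1:ℝ) ≤ (m:ℝ) := by exact_mod_cast hm
    nlinarith
  by_contra hp
  -- chebTheta is constant on [N-1, N] since N is not prime
  have key : ∀ x : ℝ, ⌊x⌋₊ = N - 1 → chebTheta x = chebTheta N := by
    intro x hfl
    unfold chebTheta
    rw [hfl, Nat.floor_natCast]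
    have hNe : N - 1 + 1 = N := by omega
    rw [hNe, Finset.range_add_one, Finset.filter_insert]
    simp [hp]
  have hcast : ((N - 1 : ℕ) : ℝ) = (N : ℝ) - 1 := by
    push_cast [Nat.cast_sub (by omega : 1 ≤ N)]
    ring
  have hmem : N - 1 ∈ {N : ℕ | 0 < N ∧ ∀ x : ℝ, (N : ℝ) ≤ x →
      (m : ℝ) * Real.log x ≤ chebTheta x - chebTheta (x / v)} := by
    constructor
    · omega
    · intro x hx
      rcases le_or_gt (N : ℝ) x with hxN | hxN
      · exact hprop x hxN
      · rw [hcast] at hx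
        have hN2 : (2:ℝ) ≤ (N:ℝ) := by exact_mod_cast h2
        have hx1 : (1:ℝ) ≤ x := by linarith
        have hfl : ⌊x⌋₊ = N - 1 := by
          rw [Nat.floor_eq_iff (by linarith)]
          rw [hcast]
          constructor <;> [linarith; linarith]
        have hθx : chebTheta x = chebTheta N := key x hfl
        have hNprop := hprop N le_rfl
        have hlog : Real.log x ≤ Real.log N := by
          apply Real.log_le_log (by linarith) hxN.le
        have hmul : (m:ℝ) * Real.log x ≤ (m:ℝ) * Real.log N :=
          mul_le_mul_of_nonneg_left hlog (by positivity)
        have hdiv : chebTheta (x / v) ≤ chebTheta (N / v) := by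
          apply chebTheta_mono
          apply div_le_div_of_nonneg_right  -- maybe wrong name
          · exact hxN.le
          · linarith
        linarith
  have := hleast hmem
  omega
end

section
/- For every m ≥ 2, N₁(m) = (R(m) + 1)/2, where N₁(m) is the smallest integer such that for all n ≥ N₁(m) the open interval (n, 2n) contains at least m primes, and R(m) is the m-th Ramanujan prime. -/
lemma primePi_natCast (j : ℕ) : primePi (j : ℝ) = Nat.primeCounting j := by
  simp [primePi]

lemma primePi_half (x : ℝ) : primePi (x / 2) = Nat.primeCounting (⌊x⌋₊ / 2) := by
  rw [primePi]
  congr 1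
  have := Nat.floor_div_natCast x 2
  norm_num at this
  exact this

lemma pc_succ (k : ℕ) : Nat.primeCounting (k + 1)
    = Nat.primeCounting k + if Nat.Prime (k+1) then 1 else 0 := by
  show Nat.count Nat.Prime (k+2) = _
  rw [Nat.count_succ]
  rfl

lemma count_Ioo (n : ℕ) (hn : 1 ≤ n) :
    ((Finset.Ioo n (2*n)).filter Nat.Prime).card + Nat.primeCounting n
      = Nat.primeCounting (2*n - 1) := by
  have h1 : Nat.primeCounting n = ((Finset.range (n+1)).filter Nat.Prime).card :=
    Nat.count_eq_card_filter_range _ _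
  have h2 : Nat.primeCounting (2*n - 1) = ((Finset.range (2*n)).filter Nat.Prime).card := by
    have : 2*n - 1 + 1 = 2*n := by omega
    rw [show Nat.primeCounting (2*n-1) = Nat.count Nat.Prime (2*n-1+1) from rfl, this]
    exact Nat.count_eq_card_filter_range _ _
  have hu : Finset.range (n+1) ∪ Finset.Ioo n (2*n) = Finset.range (2*n) := by
    rw [Finset.range_eq_Ico, Finset.range_eq_Ico, ← Finset.Ico_add_one_left_eq_Ioo]
    exact Finset.Ico_union_Ico_eq_Ico (by omega) (by omega)
  have hd : Disjoint (Finset.range (n+1)) (Finset.Ioo n (2*n)) := by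
    rw [Finset.disjoint_left]
    intro a ha hb
    simp only [Finset.mem_range] at ha
    simp only [Finset.mem_Ioo] at hb
    omega
  rw [h1, h2, ← hu, Finset.filter_union,
    Finset.card_union_of_disjoint (Finset.disjoint_filter_filter hd)]
  omega

lemma not_prime_two_mul (n : ℕ) (hn : 2 ≤ n) : ¬ Nat.Prime (2*n) := by
  intro hp
  rcases (Nat.Prime.eq_one_or_self_of_dvd hp 2 ⟨n, rfl⟩) with h | h <;> omega
theorem N1_eq_Ramanujan_succ_div_two (m : ℕ) (hm : 2 ≤ m) (R N : ℕ)
    (hR : IsLeast {M : ℕ | 0 < M ∧ ∀ x : ℝ, (M : ℝ) ≤ x →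
      m ≤ primePi x - primePi (x / 2)} R)
    (hN : IsLeast {M : ℕ | ∀ n : ℕ, M ≤ n →
      m ≤ ((Finset.Ioo n (2 * n)).filter Nat.Prime).card} N) :
    2 * N = R + 1 := by
  obtain ⟨⟨hRpos, hRcond⟩, hRmin⟩ := hR
  obtain ⟨hNcond, hNmin⟩ := hN
  -- nat version of hR condition
  have hRnat : ∀ j : ℕ, R ≤ j → Nat.primeCounting (j / 2) + m ≤ Nat.primeCounting j := by
    intro j hj
    have hx : (R : ℝ) ≤ (j : ℝ) := by exact_mod_cast hj
    have := hRcond j hx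
    rw [primePi_natCast, primePi_half, Nat.floor_natCast] at this
    omega
  -- helper: P (2n) = P (2n-1) for n ≥ 2
  have hstep : ∀ n : ℕ, 2 ≤ n → Nat.primeCounting (2*n) = Nat.primeCounting (2*n - 1) := by
    intro n hn
    have hnp : ¬ Nat.Prime (2*n) := not_prime_two_mul n hn
    have h := pc_succ (2*n - 1)
    have e : 2*n - 1 + 1 = 2*n := by omega
    rw [e, if_neg hnp] at h
    omega
  -- R ≥ 5
  have hR5 : 5 ≤ R := by
    by_contra h
    have h1 := hRnat 4 (by omega)
    have e : (4:ℕ)/2 = 2 := rfl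
    rw [e] at h1
    have h4 : Nat.primeCounting 4 = 2 := by decide
    have h2 : Nat.primeCounting 2 = 1 := by decide
    omega
  -- failure at R - 1
  have hfail : Nat.primeCounting (R - 1) < Nat.primeCounting ((R - 1) / 2) + m := by
    have hnot : R - 1 ∉ {M : ℕ | 0 < M ∧ ∀ x : ℝ, (M : ℝ) ≤ x →
        m ≤ primePi x - primePi (x / 2)} := by
      intro hmem
      have := hRmin hmem
      omega
    simp only [Set.mem_setOf_eq, not_and, not_forall] at hnot
    obtain ⟨x, hx, hxfail⟩ := hnot (by omega)
    set j := ⌊x⌋₊ with hj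
    have hjR : R - 1 ≤ j := Nat.le_floor hx
    have hxval : primePi x = Nat.primeCounting j := rfl
    have hxval2 : primePi (x / 2) = Nat.primeCounting (j / 2) := primePi_half x
    rw [hxval, hxval2] at hxfail
    have hjlt : Nat.primeCounting j < Nat.primeCounting (j / 2) + m := by omega
    rcases Nat.lt_or_ge j R with hcase | hcase
    · have : j = R - 1 := by omega
      rwa [this] at hjlt
    · have := hRnat j hcase
      omega
  -- R is odd
  have hodd : R % 2 = 1 := by
    by_contra h
    obtain ⟨n, hn⟩ : ∃ n, R = 2 * n := ⟨R / 2, by omega⟩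
    have hn3 : 3 ≤ n := by omega
    have hf : Nat.primeCounting (2*n - 1) < Nat.primeCounting (n - 1) + m := by
      have e2 : (R - 1) / 2 = n - 1 := by omega
      have e1 : R - 1 = 2*n - 1 := by omega
      rwa [e2, e1] at hfail
    have h2n := hRnat (2*n) (by omega)
    have e3 : (2*n) / 2 = n := by omega
    rw [e3] at h2n
    have hs := hstep n (by omega)
    have hmono := Nat.monotone_primeCounting (show n - 1 ≤ n by omega)
    omega
  -- N' = (R+1)/2
  set N' := (R + 1) / 2 with hN'
  have hN'3 : 3 ≤ N' := by omega
  -- N' is in the set for N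
  have hmem : N' ∈ {M : ℕ | ∀ n : ℕ, M ≤ n →
      m ≤ ((Finset.Ioo n (2 * n)).filter Nat.Prime).card} := by
    intro n hn
    have hcnt := count_Ioo n (by omega)
    have h2n := hRnat (2*n) (by omega)
    have e3 : (2*n) / 2 = n := by omega
    rw [e3] at h2n
    have hs := hstep n (by omega)
    omega
  have hNle : N ≤ N' := hNmin hmem
  -- N ≥ N'
  have hNge : N' ≤ N := by
    by_contra h
    have hc := hNcond (N' - 1) (by omega)
    have hcnt := count_Ioo (N' - 1) (by omega)
    have hf : Nat.primeCounting (2*N' - 2) < Nat.primeCounting (N' - 1) + m := by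
      have e2 : (R - 1) / 2 = N' - 1 := by omega
      have e1 : R - 1 = 2*N' - 2 := by omega
      rwa [e2, e1] at hfail
    have e4 : 2 * (N' - 1) - 1 = 2*N' - 3 := by omega
    rw [e4] at hcnt
    have hmono := Nat.monotone_primeCounting (show 2*N' - 3 ≤ 2*N' - 2 by omega)
    omega
  omega
end

section
/- For k ≥ 1 and m ≥ 2, if R_{(k+1)/k}(m) ≡ 1 (mod k+1), then N_k(m) = (R_{(k+1)/k}(m) + k)/(k+1). -/
lemma pc_add (a b : ℕ) (h : a ≤ b) :
    Nat.primeCounting a + ((Finset.Ioc a b).filter Nat.Prime).card = Nat.primeCounting b := by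
  have h1 : ∀ n, Nat.primeCounting n = ((Finset.Ico 0 (n+1)).filter Nat.Prime).card := by
    intro n
    rw [Nat.primeCounting, Nat.primeCounting', Nat.count_eq_card_filter_range,
      Finset.range_eq_Ico]
  rw [h1, h1, ← Finset.Ico_add_one_add_one_eq_Ioc, ← Finset.card_union_of_disjoint ?_, ← Finset.filter_union,
    Finset.Ico_union_Ico_eq_Ico (Nat.zero_le _) (by omega)]
  exact Finset.disjoint_filter_filter (Finset.Ico_disjoint_Ico_consecutive 0 (a+1) (b+1))

theorem Nk_eq_of_R_mod_one (k m : ℕ) (hk : 1 ≤ k) (hm : 2 ≤ m) (R N : ℕ)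
    (hR : IsLeast {M : ℕ | 0 < M ∧ ∀ x : ℝ, (M : ℝ) ≤ x →
      m ≤ primePi x - primePi (k * x / (k + 1))} R)
    (hN : IsLeast {M : ℕ | ∀ n : ℕ, M ≤ n →
      m ≤ ((Finset.Ioo (k * n) ((k + 1) * n)).filter Nat.Prime).card} N)
    (hmod : R % (k + 1) = 1) :
    (k + 1) * N = R + k := by
  have hkpos : (0:ℝ) < (k:ℝ) + 1 := by positivity
  have hkR : (0:ℝ) < (k:ℝ) := by exact_mod_cast hk
  -- R ≠ 1
  have hR1 : R ≠ 1 := by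
    intro h
    have := hR.1.2 1 (by simp [h])
    rw [primePi, primePi] at this
    have h1 : ⌊(1:ℝ)⌋₊ = 1 := by simp
    have h2 : ⌊(k:ℝ) * 1 / ((k:ℝ)+1)⌋₊ = 0 := by
      rw [Nat.floor_eq_zero, div_lt_one hkpos]
      linarith
    rw [h1, h2] at this
    simp [Nat.primeCounting_one, Nat.primeCounting_zero] at this
    omega
  obtain ⟨q, hRq⟩ : ∃ q, R = (k+1) * q + 1 := by
    refine ⟨R / (k+1), ?_⟩
    conv_lhs => rw [← Nat.div_add_mod R (k+1)]
    rw [hmod]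
  have hq1 : 1 ≤ q := by
    by_contra h
    push_neg at h
    interval_cases q
    simp at hRq
    exact hR1 hRq
  -- upper bound: q + 1 is in the N-set
  have key_in : (q + 1) ∈ {M : ℕ | ∀ n : ℕ, M ≤ n →
      m ≤ ((Finset.Ioo (k * n) ((k + 1) * n)).filter Nat.Prime).card} := by
    intro n hn
    have hn2 : 2 ≤ n := by omega
    have hRn : R ≤ (k+1) * n := by
      rw [hRq]
      have h1 : (k+1) * (q+1) ≤ (k+1) * n := Nat.mul_le_mul_left _ hn
      have h2 : (k+1) * (q+1) = (k+1) * q + (k+1) := by ring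
      omega
    have hx := hR.1.2 (((k+1) * n : ℕ) : ℝ) (by exact_mod_cast hRn)
    rw [primePi, primePi, Nat.floor_natCast] at hx
    have h2 : (k:ℝ) * (((k+1) * n : ℕ) : ℝ) / ((k:ℝ)+1) = ((k * n : ℕ) : ℝ) := by
      push_cast
      field_simp
    rw [h2, Nat.floor_natCast] at hx
    have hle : k * n ≤ (k+1) * n := Nat.mul_le_mul_right _ (by omega)
    have hcount := pc_add (k*n) ((k+1)*n) hle
    have hx' : m ≤ ((Finset.Ioc (k*n) ((k+1)*n)).filter Nat.Prime).card := by omega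
    refine hx'.trans (Finset.card_le_card ?_)
    intro p hp
    simp only [Finset.mem_filter, Finset.mem_Ioc, Finset.mem_Ioo] at hp ⊢
    refine ⟨⟨hp.1.1, lt_of_le_of_ne hp.1.2 ?_⟩, hp.2⟩
    intro hpe
    have hprime := hp.2
    rw [hpe] at hprime
    have := Nat.prime_mul_iff.mp hprime
    omega
  -- lower bound: q + 1 ≤ N
  have hqN : q + 1 ≤ N := by
    by_contra hcon
    push_neg at hcon
    have hNq : N ≤ q := by omega
    have hnotin : ((k+1)*q) ∉ {M : ℕ | 0 < M ∧ ∀ x : ℝ, (M : ℝ) ≤ x →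
        m ≤ primePi x - primePi (k * x / (k + 1))} := by
      intro hmem
      have := hR.2 hmem
      omega
    simp only [Set.mem_setOf_eq] at hnotin
    push_neg at hnotin
    have hpos : 0 < (k+1)*q := Nat.mul_pos (Nat.succ_pos k) hq1
    obtain ⟨x, hx1, hx2⟩ := hnotin hpos
    have hx0 : (0:ℝ) ≤ x := le_trans (by positivity) hx1
    have hxR : x < (R:ℝ) := by
      by_contra hge
      push_neg at hge
      have := hR.1.2 x hge
      omega
    have hRcast : (R:ℝ) = (((k+1)*q : ℕ) : ℝ) + 1 := by
      rw [hRq]; push_cast; ring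
    have hfx : ⌊x⌋₊ = (k+1)*q := by
      rw [Nat.floor_eq_iff hx0]
      exact ⟨hx1, by rw [← hRcast]; exact hxR⟩
    have hfy : ⌊(k:ℝ) * x / ((k:ℝ)+1)⌋₊ = k*q := by
      rw [Nat.floor_eq_iff (div_nonneg (mul_nonneg hkR.le hx0) hkpos.le)]
      constructor
      · rw [le_div_iff₀ hkpos]
        have h1 : (((k+1)*q : ℕ) : ℝ) ≤ x := hx1
        have h2 : (((k+1)*q : ℕ) : ℝ) = ((k:ℝ)+1) * q := by push_cast; ring
        have h3 : (((k*q) : ℕ) : ℝ) = (k:ℝ) * q := by push_cast; ring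
        rw [h3]
        nlinarith
      · rw [div_lt_iff₀ hkpos]
        have h1 : x < (((k+1)*q : ℕ) : ℝ) + 1 := by rw [← hRcast]; exact hxR
        have h2 : (((k+1)*q : ℕ) : ℝ) = ((k:ℝ)+1) * q := by push_cast; ring
        have h3 : (((k*q) : ℕ) : ℝ) = (k:ℝ) * q := by push_cast; ring
        rw [h3]
        nlinarith
    rw [primePi, primePi, hfx, hfy] at hx2
    have hle : k * q ≤ (k+1) * q := Nat.mul_le_mul_right _ (by omega)
    have hcount := pc_add (k*q) ((k+1)*q) hle
    have hsub : ((Finset.Ioo (k*q) ((k+1)*q)).filter Nat.Prime).card ≤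
        ((Finset.Ioc (k*q) ((k+1)*q)).filter Nat.Prime).card :=
      Finset.card_le_card (Finset.filter_subset_filter _ Finset.Ioo_subset_Ioc_self)
    have hNset := hN.1 q hNq
    omega
  have hNeq : N = q + 1 := le_antisymm (hN.2 key_in) hqN
  rw [hNeq, hRq]
  ring
end

section
/- Suppose that for every real x ≥ x₀ the interval (x, (1 + 1/Δ)x] contains a prime, and let k ≥ 1 and m ≥ 1 be integers with (1 + 1/Δ)^m < 1 + 1/k. Then for every integer n ≥ x₀/k, the open interval (kn, (k+1)n) contains at least m primes. -/
theorem small_intervals_method (Δ x₀ : ℝ) (k m : ℕ) (hk : 1 ≤ k) (hm : 1 ≤ m)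
    (hprime : ∀ x : ℝ, x₀ ≤ x → ∃ p : ℕ, p.Prime ∧ x < (p : ℝ) ∧ (p : ℝ) ≤ (1 + 1 / Δ) * x)
    (hpow : (1 + 1 / Δ) ^ m < 1 + 1 / (k : ℝ)) :
    ∀ n : ℕ, x₀ / k ≤ (n : ℝ) →
      m ≤ ((Finset.Ioo (k * n) ((k + 1) * n)).filter Nat.Prime).card := by
  intro n hn
  set q : ℝ := 1 + 1 / Δ with hq
  have hk0 : (0:ℝ) < k := by exact_mod_cast hk
  have hx0 : x₀ ≤ (k:ℝ) * n := by
    rw [div_le_iff₀ hk0] at hn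
    linarith [hn]
  rcases Nat.eq_zero_or_pos n with rfl | hn1
  · exfalso
    obtain ⟨p, hp, h1, h2⟩ := hprime 0 (by simpa using hx0)
    have h0 : (0:ℝ) < p := h1
    simp at h2
    exact absurd h2 hp.pos.ne'
  have hn0 : (0:ℝ) < n := by exact_mod_cast hn1
  have hkn0 : (0:ℝ) < (k:ℝ) * n := mul_pos hk0 hn0
  have hq1 : 1 < q := by
    by_contra h
    push_neg at h
    obtain ⟨p, hp, h1, h2⟩ := hprime ((k:ℝ)*n) hx0
    nlinarith [mul_le_mul_of_nonneg_right h hkn0.le]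
  have hx : ∀ i : ℕ, x₀ ≤ q ^ i * ((k:ℝ) * n) := by
    intro i
    have h1 : (1:ℝ) ≤ q ^ i := one_le_pow₀ hq1.le
    nlinarith
  choose p hpp hlt hle using fun i : ℕ => hprime (q ^ i * ((k:ℝ)*n)) (hx i)
  -- p i ≤ q^(i+1) * kn
  have hle' : ∀ i : ℕ, (p i : ℝ) ≤ q ^ (i+1) * ((k:ℝ)*n) := by
    intro i
    have := hle i
    calc (p i : ℝ) ≤ q * (q ^ i * ((k:ℝ)*n)) := this
      _ = q ^ (i+1) * ((k:ℝ)*n) := by ring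
  have hmono : ∀ i j : ℕ, i < j → p i < p j := by
    intro i j hij
    have h1 : (p i : ℝ) ≤ q ^ (i+1) * ((k:ℝ)*n) := hle' i
    have h2 : q ^ i * ((k:ℝ)*n) < (p j : ℝ) → True := fun _ => trivial
    have h3 : q ^ (i+1) ≤ q ^ j := pow_le_pow_right₀ hq1.le hij
    have h4 : q ^ j * ((k:ℝ)*n) < (p j : ℝ) := hlt j
    have : (p i : ℝ) < (p j : ℝ) := by nlinarith
    exact_mod_cast this
  have hmem : ∀ i : ℕ, i < m → p i ∈ (Finset.Ioo (k * n) ((k + 1) * n)).filter Nat.Prime := by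
    intro i him
    have h1 : (1:ℝ) ≤ q ^ i := one_le_pow₀ hq1.le
    have hlow : ((k:ℝ) * n) < (p i : ℝ) := by nlinarith [hlt i]
    have h3 : q ^ (i+1) ≤ q ^ m := pow_le_pow_right₀ hq1.le him
    have hhigh : (p i : ℝ) < ((k:ℝ) + 1) * n := by
      have h5 : (1 + 1/(k:ℝ)) * ((k:ℝ)*n) = ((k:ℝ)+1) * n := by
        field_simp
      nlinarith [hle' i]
    have hlowN : k * n < p i := by exact_mod_cast (by push_cast; exact hlow : ((k*n : ℕ) : ℝ) < (p i : ℝ))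
    have hhighN : p i < (k+1) * n := by exact_mod_cast (by push_cast; linarith : ((p i : ℕ) : ℝ) < (((k+1)*n : ℕ) : ℝ))
    simp only [Finset.mem_filter, Finset.mem_Ioo]
    exact ⟨⟨hlowN, hhighN⟩, hpp i⟩
  calc m = (Finset.range m).card := (Finset.card_range m).symm
    _ ≤ _ := by
        apply Finset.card_le_card_of_injOn p
        · intro i hi
          exact hmem i (Finset.mem_range.mp hi)
        · intro i _ j _ hij
          rcases lt_trichotomy i j with h | h | h
          · exact absurd hij (hmono i j h).ne
          · exact h
          · exact absurd hij.symm (hmono j i h).ne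
end
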